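/- Let N ∈ ℕ, σ ∈ (0,1) with 2σ < N, and let θ satisfy max{2, N/(N−2σ)} < θ < 2N/(N−2σ). Let W = W₁ + W₂ with W₁ ∈ L^r(ℝ^N) for some r ∈ ( N/(N(2−θ)+2σθ), 2N/(N(2−θ)+2σθ) ] and W₂ ∈ L^∞(ℝ^N). Let h ∈ L²(ℝ^N) ∩ L^{2N/(N−2σ)}(ℝ^N) and let F : ℝ → ℝ be measurable with |F(t)| ≤ C(|t|² + |t|^{θ}) for all t and some C > 0. Then there exist a constant C' ≥ 0 and a nonnegative function g ∈ L^{2N/(N(2−θ)+2σθ)}(ℝ^N) such that |(W * (F∘h))(y)| ≤ C' + g(y) for almost every y ∈ ℝ^N. -/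

import Mathlib

open Filter Set MeasureTheory
open scoped ENNReal


section Aux

lemma aux_rpow_le_add {c : ℝ≥0∞} {a t b : ℝ} (hat : a ≤ t) (htb : t ≤ b) :
    c ^ t ≤ c ^ a + c ^ b := by
  rcases le_total c 1 with hc | hc
  · exact le_add_right (ENNReal.rpow_le_rpow_of_exponent_ge hc hat)
  · exact le_add_left (ENNReal.rpow_le_rpow_of_exponent_le hc htb)

lemma aux_add_rpow_le {x y : ℝ≥0∞} {s : ℝ} (hs : 0 ≤ s) :
    (x + y) ^ s ≤ 2 ^ s * (x ^ s + y ^ s) := by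
  have h1 : x + y ≤ 2 * max x y := by
    rcases le_total x y with hxy | hxy
    · calc x + y ≤ y + y := by gcongr
        _ = 2 * y := (two_mul y).symm
        _ ≤ 2 * max x y := by gcongr; exact le_max_right _ _
    · calc x + y ≤ x + x := by gcongr
        _ = 2 * x := (two_mul x).symm
        _ ≤ 2 * max x y := by gcongr; exact le_max_left _ _
  calc (x + y) ^ s ≤ (2 * max x y) ^ s := ENNReal.rpow_le_rpow h1 hs
    _ = 2 ^ s * (max x y) ^ s := ENNReal.mul_rpow_of_nonneg _ _ hs
    _ ≤ 2 ^ s * (x ^ s + y ^ s) := by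
        gcongr
        rcases le_total x y with hxy | hxy
        · rw [max_eq_right hxy]; exact le_add_left le_rfl
        · rw [max_eq_left hxy]; exact le_add_right le_rfl

lemma aux_lint_lt_top_of_memLp {α : Type*} [MeasurableSpace α] {μ : Measure α}
    {f : α → ℝ} {t : ℝ} (ht : 0 < t) (hf : MemLp f (ENNReal.ofReal t) μ) :
    ∫⁻ x, (‖f x‖₊ : ℝ≥0∞) ^ t ∂μ < ∞ := by
  have h0 : ENNReal.ofReal t ≠ 0 := by simp [ht.not_ge, ENNReal.ofReal_eq_zero]
  have hne : ENNReal.ofReal t ≠ ∞ := ENNReal.ofReal_ne_top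
  have hlt := hf.eLpNorm_lt_top
  rw [eLpNorm_eq_lintegral_rpow_enorm_toReal h0 hne, ENNReal.toReal_ofReal ht.le] at hlt
  simp only [enorm_eq_nnnorm] at hlt
  by_contra hcon
  push_neg at hcon
  rw [top_le_iff] at hcon
  rw [hcon, ENNReal.top_rpow_of_pos (by positivity)] at hlt
  exact (lt_irrefl _ hlt).elim

end Aux

lemma aux_young {N : ℕ} {f g : (Fin N → ℝ) → ℝ≥0∞} (hf : Measurable f) (hg : Measurable g)
    {p r s : ℝ} (hp : 0 < p) (hr : 0 < r) (hs : 0 < s)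
    (hpr : 1 / p ≤ 1 / r) (hps : 1 / p ≤ 1 / s) (hsum : 1 / r + 1 / s = 1 + 1 / p)
    (hA : ∫⁻ x, f x ^ r < ∞) (hB : ∫⁻ x, g x ^ s < ∞) :
    ∫⁻ y, (∫⁻ w, f (y - w) * g w) ^ p < ∞ := by
  set A := ∫⁻ x, f x ^ r with hAdef
  set B := ∫⁻ x, g x ^ s with hBdef
  set e₁ := 1 / r - 1 / p with he₁def
  set e₂ := 1 / s - 1 / p with he₂def
  have he₁ : 0 ≤ e₁ := sub_nonneg.2 hpr
  have he₂ : 0 ≤ e₂ := sub_nonneg.2 hps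
  have hfr : Measurable fun x => f x ^ r := hf.pow_const r
  have hgs : Measurable fun x => g x ^ s := hg.pow_const s
  -- pointwise Hölder
  have key : ∀ y : Fin N → ℝ,
      (∫⁻ w, f (y - w) * g w) ≤ (∫⁻ w, f (y - w) ^ r * g w ^ s) ^ (1 / p) * (A ^ e₁ * B ^ e₂) := by
    intro y
    have hmp : MeasurePreserving (fun w : Fin N → ℝ => y - w) volume volume := by
      have := (measurePreserving_add_left (volume : Measure (Fin N → ℝ)) y).comp
        (MeasureTheory.Measure.measurePreserving_neg volume)
      simpa [Function.comp_def, sub_eq_add_neg] using this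
    have hfy : Measurable fun w : Fin N → ℝ => f (y - w) :=
      hf.comp (measurable_const.sub measurable_id)
    have hFuns : ∀ i ∈ (Finset.univ : Finset (Fin 3)),
        AEMeasurable ((![fun w => f (y - w) ^ r * g w ^ s,
          fun w => f (y - w) ^ r, fun w => g w ^ s] : Fin 3 → (Fin N → ℝ) → ℝ≥0∞) i)
          (volume : Measure (Fin N → ℝ)) := by
      intro i _
      fin_cases i
      · exact ((hfy.pow_const r).mul hgs).aemeasurable
      · exact (hfy.pow_const r).aemeasurable
      · exact hgs.aemeasurable
    have hexps : ∑ i ∈ (Finset.univ : Finset (Fin 3)),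
        (![1 / p, e₁, e₂] : Fin 3 → ℝ) i = 1 := by
      simp only [Fin.sum_univ_three, Matrix.cons_val_zero, Matrix.cons_val_one,
        Matrix.head_cons, Matrix.cons_val_two, Matrix.tail_cons]
      rw [he₁def, he₂def]; linarith [hsum]
    have hexps0 : ∀ i ∈ (Finset.univ : Finset (Fin 3)),
        0 ≤ (![1 / p, e₁, e₂] : Fin 3 → ℝ) i := by
      intro i _
      fin_cases i
      · simp only [Matrix.cons_val_zero]; exact (one_div_pos.mpr hp).le
      · exact he₁
      · exact he₂
    have H := ENNReal.lintegral_prod_norm_pow_le (μ := (volume : Measure (Fin N → ℝ)))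
      Finset.univ hFuns hexps hexps0
    have hab : ∀ a b : ℝ≥0∞,
        (a ^ r * b ^ s) ^ (1 / p) * ((a ^ r) ^ e₁ * (b ^ s) ^ e₂) = a * b := by
      intro a b
      have h1 : r * (1 / p) + r * e₁ = 1 := by rw [he₁def]; field_simp; ring
      have h2 : s * (1 / p) + s * e₂ = 1 := by rw [he₂def]; field_simp; ring
      rw [ENNReal.mul_rpow_of_nonneg _ _ (one_div_pos.mpr hp).le,
        ← ENNReal.rpow_mul a, ← ENNReal.rpow_mul b, ← ENNReal.rpow_mul a, ← ENNReal.rpow_mul b]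
      calc a ^ (r * (1 / p)) * b ^ (s * (1 / p)) * (a ^ (r * e₁) * b ^ (s * e₂))
          = (a ^ (r * (1 / p)) * a ^ (r * e₁)) * (b ^ (s * (1 / p)) * b ^ (s * e₂)) := by ring
        _ = a ^ (r * (1 / p) + r * e₁) * b ^ (s * (1 / p) + s * e₂) := by
            rw [ENNReal.rpow_add_of_nonneg _ _ (mul_nonneg hr.le (one_div_pos.mpr hp).le) (mul_nonneg hr.le he₁),
              ENNReal.rpow_add_of_nonneg _ _ (mul_nonneg hs.le (one_div_pos.mpr hp).le) (mul_nonneg hs.le he₂)]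
        _ = a * b := by rw [h1, h2, ENNReal.rpow_one, ENNReal.rpow_one]
    have hLHS : (∫⁻ w, ∏ i : Fin 3,
        (![fun w => f (y - w) ^ r * g w ^ s, fun w => f (y - w) ^ r,
          fun w => g w ^ s] : Fin 3 → (Fin N → ℝ) → ℝ≥0∞) i w
          ^ (![1 / p, e₁, e₂] : Fin 3 → ℝ) i)
        = ∫⁻ w, f (y - w) * g w := by
      congr 1
      funext w
      simp only [Fin.prod_univ_three, Matrix.cons_val_zero, Matrix.cons_val_one,
        Matrix.head_cons, Matrix.cons_val_two, Matrix.tail_cons]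
      rw [mul_assoc]
      exact hab (f (y - w)) (g w)
    have hRHS : (∏ i : Fin 3, (∫⁻ w,
        (![fun w => f (y - w) ^ r * g w ^ s, fun w => f (y - w) ^ r,
          fun w => g w ^ s] : Fin 3 → (Fin N → ℝ) → ℝ≥0∞) i w)
          ^ (![1 / p, e₁, e₂] : Fin 3 → ℝ) i)
        = (∫⁻ w, f (y - w) ^ r * g w ^ s) ^ (1 / p) * (A ^ e₁ * B ^ e₂) := by
      simp only [Fin.prod_univ_three, Matrix.cons_val_zero, Matrix.cons_val_one,
        Matrix.head_cons, Matrix.cons_val_two, Matrix.tail_cons]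
      rw [mul_assoc]
      congr 2
      rw [hAdef]
      exact congrArg (· ^ e₁) (hmp.lintegral_comp hfr)
    rw [hLHS, hRHS] at H
    exact H
  -- raise to the p-th power
  have key2 : ∀ y : Fin N → ℝ,
      (∫⁻ w, f (y - w) * g w) ^ p ≤ (∫⁻ w, f (y - w) ^ r * g w ^ s) * (A ^ e₁ * B ^ e₂) ^ p := by
    intro y
    calc (∫⁻ w, f (y - w) * g w) ^ p
        ≤ ((∫⁻ w, f (y - w) ^ r * g w ^ s) ^ (1 / p) * (A ^ e₁ * B ^ e₂)) ^ p :=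
          ENNReal.rpow_le_rpow (key y) hp.le
      _ = (∫⁻ w, f (y - w) ^ r * g w ^ s) * (A ^ e₁ * B ^ e₂) ^ p := by
          rw [ENNReal.mul_rpow_of_nonneg _ _ hp.le, ← ENNReal.rpow_mul,
            one_div_mul_cancel hp.ne', ENNReal.rpow_one]
  -- integrate in y and use Tonelli
  have hswap : ∫⁻ y, (∫⁻ w, f (y - w) ^ r * g w ^ s) = A * B := by
    have hmeas : AEMeasurable (Function.uncurry fun y w : Fin N → ℝ => f (y - w) ^ r * g w ^ s)
        ((volume : Measure (Fin N → ℝ)).prod volume) := by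
      apply Measurable.aemeasurable
      exact ((hf.comp (measurable_fst.sub measurable_snd)).pow_const r).mul
        ((hg.comp measurable_snd).pow_const s)
    rw [lintegral_lintegral_swap hmeas]
    have hinner : ∀ w : Fin N → ℝ, (∫⁻ y, f (y - w) ^ r * g w ^ s) = A * g w ^ s := by
      intro w
      have hfyw : AEMeasurable (fun y : Fin N → ℝ => f (y - w) ^ r) volume :=
        ((hf.comp (measurable_id.sub measurable_const)).pow_const r).aemeasurable
      rw [lintegral_mul_const'' _ hfyw]
      congr 1
      rw [hAdef]
      exact (measurePreserving_sub_right volume w).lintegral_comp hfr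
    simp_rw [hinner]
    rw [lintegral_const_mul'' _ hgs.aemeasurable]
  have hKfin : (A ^ e₁ * B ^ e₂) ^ p < ∞ := by
    apply ENNReal.rpow_lt_top_of_nonneg hp.le
    exact (ENNReal.mul_lt_top (ENNReal.rpow_lt_top_of_nonneg he₁ hA.ne)
      (ENNReal.rpow_lt_top_of_nonneg he₂ hB.ne)).ne
  calc ∫⁻ y, (∫⁻ w, f (y - w) * g w) ^ p
      ≤ ∫⁻ y, (∫⁻ w, f (y - w) ^ r * g w ^ s) * (A ^ e₁ * B ^ e₂) ^ p :=
        lintegral_mono key2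
    _ = (A * B) * (A ^ e₁ * B ^ e₂) ^ p := by
        rw [lintegral_mul_const' _ _ hKfin.ne, hswap]
    _ < ∞ := ENNReal.mul_lt_top (ENNReal.mul_lt_top hA hB) hKfin


set_option maxHeartbeats 2000000 in
/-- Corollary: with `W = W₁ + W₂`, `W₁ ∈ L^r` for some
`r ∈ (N/(N(2−θ)+2σθ), 2N/(N(2−θ)+2σθ)]` and `W₂ ∈ L^∞`, and `F∘h` as before,
there are `C' ≥ 0` and `0 ≤ g ∈ L^{2N/(N(2−θ)+2σθ)}` with
`|(W * (F∘h))(y)| ≤ C' + g(y)` for a.e. `y`. -/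
theorem stmt8 (N : ℕ) (σ θ : ℝ) (hσ0 : 0 < σ) (hσ1 : σ < 1) (hσN : 2 * σ < (N : ℝ))
    (hθ1 : max 2 ((N : ℝ) / ((N : ℝ) - 2 * σ)) < θ)
    (hθ2 : θ < 2 * (N : ℝ) / ((N : ℝ) - 2 * σ))
    (W W₁ W₂ : (Fin N → ℝ) → ℝ) (hW : W = W₁ + W₂)
    (r : ℝ)
    (hr1 : (N : ℝ) / ((N : ℝ) * (2 - θ) + 2 * σ * θ) < r)
    (hr2 : r ≤ 2 * (N : ℝ) / ((N : ℝ) * (2 - θ) + 2 * σ * θ))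
    (hW₁ : MemLp W₁ (ENNReal.ofReal r) volume)
    (hW₂ : MemLp W₂ ⊤ volume)
    (h : (Fin N → ℝ) → ℝ)
    (hh2 : MemLp h (ENNReal.ofReal 2) volume)
    (hhc : MemLp h (ENNReal.ofReal (2 * (N : ℝ) / ((N : ℝ) - 2 * σ))) volume)
    (F : ℝ → ℝ) (hFmeas : Measurable F)
    (C : ℝ) (hC : 0 < C) (hFbound : ∀ t : ℝ, |F t| ≤ C * (|t| ^ 2 + |t| ^ θ)) :
    ∃ C' : ℝ, 0 ≤ C' ∧ ∃ g : (Fin N → ℝ) → ℝ, (∀ y, 0 ≤ g y) ∧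
      MemLp g (ENNReal.ofReal (2 * (N : ℝ) / ((N : ℝ) * (2 - θ) + 2 * σ * θ))) volume ∧
      ∀ᵐ y ∂(volume : Measure (Fin N → ℝ)),
        |∫ w, W (y - w) * F (h w)| ≤ C' + g y := by
  classical
  -- basic arithmetic on the exponents
  have hNpos : (0:ℝ) < N := lt_trans (by linarith) hσN
  have hden : (0:ℝ) < (N:ℝ) - 2 * σ := by linarith
  set qq : ℝ := 2 * (N:ℝ) / ((N:ℝ) - 2 * σ) with hqqdef
  set D : ℝ := (N:ℝ) * (2 - θ) + 2 * σ * θ with hDdef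
  set p : ℝ := 2 * (N:ℝ) / D with hpdef
  have hθgt2 : 2 < θ := lt_of_le_of_lt (le_max_left _ _) hθ1
  have hθhalf : (N:ℝ) / ((N:ℝ) - 2 * σ) < θ := lt_of_le_of_lt (le_max_right _ _) hθ1
  have hθub : θ * ((N:ℝ) - 2 * σ) < 2 * (N:ℝ) := by
    rw [hqqdef] at hθ2
    exact (lt_div_iff₀ hden).mp hθ2
  have hθlb : (N:ℝ) < θ * ((N:ℝ) - 2 * σ) := (div_lt_iff₀ hden).mp hθhalf
  have hDpos : 0 < D := by rw [hDdef]; nlinarith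
  have hDltN : D < (N:ℝ) := by rw [hDdef]; nlinarith
  have hqqpos : 0 < qq := div_pos (by linarith) hden
  have hppos : 0 < p := div_pos (by linarith) hDpos
  have hp2 : 2 < p := by
    rw [hpdef, lt_div_iff₀ hDpos]; linarith
  have hNDp : (N:ℝ) / D = p / 2 := by rw [hpdef]; ring
  have hpq : 1 / p + θ / qq = 1 := by
    rw [hpdef, hqqdef, hDdef]
    field_simp
    ring
  have hθq : θ < qq := hθ2
  clear_value qq D p
  -- choice of the auxiliary exponents r' and ss
  have hrpos : 0 < r := lt_trans (div_pos hNpos hDpos) hr1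
  have hm1 : p / 2 < min r p := lt_min (hNDp ▸ hr1) (by linarith)
  obtain ⟨r', hr'gt, hr'ltm⟩ : ∃ r', p / 2 < r' ∧ r' < min r p :=
    ⟨(p / 2 + min r p) / 2, by linarith, by linarith⟩
  have hr'p : r' < p := lt_of_lt_of_le hr'ltm (min_le_right _ _)
  have hr'r : r' ≤ r := le_of_lt (lt_of_lt_of_le hr'ltm (min_le_left _ _))
  have hr'1 : 1 < r' := by linarith
  have hr'pos : 0 < r' := by linarith
  have hinvr' : 1 / p < 1 / r' := one_div_lt_one_div_of_lt hr'pos hr'p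
  have hinvr'2 : 1 / r' < 2 / p := by
    have h1 : 1 / r' < 1 / (p / 2) := one_div_lt_one_div_of_lt (by linarith) hr'gt
    have h2 : 1 / (p / 2) = 2 / p := by field_simp
    linarith
  have hden2 : 0 < 1 + 1 / p - 1 / r' := by
    have h1 : 1 / r' < 1 := by rw [div_lt_one hr'pos]; linarith
    have h2 : 0 < 1 / p := one_div_pos.mpr hppos
    linarith
  obtain ⟨ss, hsspos, hssinv⟩ : ∃ ss, 0 < ss ∧ 1 / ss = 1 + 1 / p - 1 / r' :=
    ⟨1 / (1 + 1 / p - 1 / r'), one_div_pos.mpr hden2, by rw [one_div_one_div]⟩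
  have hss1 : 1 ≤ ss := by
    have hcase : 1 / ss ≤ 1 / 1 := by
      rw [hssinv]
      have h1 : 1 / r' ≤ 1 := by rw [div_le_one hr'pos]; linarith
      have h2 : 0 < 1 / p := one_div_pos.mpr hppos
      linarith
    exact le_of_one_div_le_one_div hsspos (by simpa using hcase)
  have hsum : 1 / r' + 1 / ss = 1 + 1 / p := by rw [hssinv]; ring
  have hsp : 1 / p ≤ 1 / ss := by
    rw [hssinv]
    have : 1 / r' ≤ 1 := by rw [div_le_one hr'pos]; linarith
    linarith
  have hθss : θ * ss < qq := by
    have h1 : θ / qq < 1 / ss := by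
      rw [hssinv]
      have heq : θ / qq = 1 - 1 / p := by linarith
      have h2p : 1 / r' < 2 * (1 / p) := by
        have : 2 / p = 2 * (1 / p) := by ring
        linarith [hinvr'2]
      linarith
    have := (div_lt_div_iff₀ hqqpos hsspos).mp h1
    linarith [this]
  have h2ss : 2 * ss ≤ θ * ss := mul_le_mul_of_nonneg_right hθgt2.le hsspos.le
  -- measurable representatives
  have hW₁am := hW₁.aestronglyMeasurable.aemeasurable
  set W₁' := hW₁am.mk W₁ with hW₁'def
  have hW₁'meas : Measurable W₁' := hW₁am.measurable_mk
  have hW₁eq : W₁ =ᵐ[volume] W₁' := hW₁am.ae_eq_mk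
  have hW₂am := hW₂.aestronglyMeasurable.aemeasurable
  set W₂' := hW₂am.mk W₂ with hW₂'def
  have hW₂'meas : Measurable W₂' := hW₂am.measurable_mk
  have hW₂eq : W₂ =ᵐ[volume] W₂' := hW₂am.ae_eq_mk
  have hham := hh2.aestronglyMeasurable.aemeasurable
  set h' := hham.mk h with hh'def
  have hh'meas : Measurable h' := hham.measurable_mk
  have hh'eq : h =ᵐ[volume] h' := hham.ae_eq_mk
  have hh2' : MemLp h' (ENNReal.ofReal 2) volume := hh2.ae_eq hh'eq
  have hhc' : MemLp h' (ENNReal.ofReal qq) volume := hhc.ae_eq hh'eq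
  -- moments of h'
  have humeas : Measurable fun w => ENNReal.ofReal |h' w| :=
    ENNReal.measurable_ofReal.comp hh'meas.abs
  have hmom : ∀ t : ℝ, 2 ≤ t → t ≤ qq → ∫⁻ w, ENNReal.ofReal |h' w| ^ t < ∞ := by
    intro t ht2 htq
    have hco : ∀ w : Fin N → ℝ, ENNReal.ofReal |h' w| = (‖h' w‖₊ : ℝ≥0∞) := fun w =>
      (Real.enorm_eq_ofReal_abs _).symm
    simp_rw [hco]
    calc ∫⁻ w, (‖h' w‖₊ : ℝ≥0∞) ^ t
        ≤ ∫⁻ w, ((‖h' w‖₊ : ℝ≥0∞) ^ (2:ℝ) + (‖h' w‖₊ : ℝ≥0∞) ^ qq) :=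
          lintegral_mono fun w => aux_rpow_le_add ht2 htq
      _ = (∫⁻ w, (‖h' w‖₊ : ℝ≥0∞) ^ (2:ℝ)) + ∫⁻ w, (‖h' w‖₊ : ℝ≥0∞) ^ qq :=
          lintegral_add_left (hh'meas.enorm.pow_const _) _
      _ < ∞ := ENNReal.add_lt_top.mpr
          ⟨aux_lint_lt_top_of_memLp (by norm_num) hh2',
           aux_lint_lt_top_of_memLp (by linarith) hhc'⟩
  -- the splitting of W₁ into an unbounded part V and a bounded part
  set V : (Fin N → ℝ) → ℝ := fun x => if 1 < |W₁' x| then W₁' x else 0 with hVdef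
  have hVmeas : Measurable V :=
    Measurable.ite (measurableSet_lt measurable_const hW₁'meas.abs) hW₁'meas measurable_const
  set B : (Fin N → ℝ) → ℝ := fun x => (W₁' x - V x) + W₂' x with hBdef
  have hBmeas : Measurable B := (hW₁'meas.sub hVmeas).add hW₂'meas
  -- the essential sup bound of W₂
  have hMfin : eLpNormEssSup W₂ volume ≠ ∞ := by
    have hlt := hW₂.eLpNorm_lt_top
    rw [eLpNorm_exponent_top] at hlt
    exact hlt.ne
  set M : ℝ := (eLpNormEssSup W₂ volume).toReal with hMdef
  have hM0 : 0 ≤ M := ENNReal.toReal_nonneg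
  have hW₂bd : ∀ᵐ x ∂(volume : Measure (Fin N → ℝ)), |W₂' x| ≤ M := by
    filter_upwards [ae_le_eLpNormEssSup (f := W₂) (μ := volume), hW₂eq] with x hx hxe
    rw [← hxe]
    have h2 := ENNReal.toReal_mono hMfin hx
    simpa [Real.norm_eq_abs] using h2
  have hBbd : ∀ᵐ x ∂(volume : Measure (Fin N → ℝ)), |B x| ≤ 1 + M := by
    filter_upwards [hW₂bd] with x hx
    have h1 : |W₁' x - V x| ≤ 1 := by
      simp only [hVdef]
      by_cases hcase : 1 < |W₁' x|
      · simp [hcase]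
      · simp only [if_neg hcase, sub_zero]
        linarith [not_lt.mp hcase]
    calc |B x| ≤ |W₁' x - V x| + |W₂' x| := abs_add_le _ _
      _ ≤ 1 + M := add_le_add h1 hx
  -- finiteness of the r'-integral of V
  have hW₁r : ∫⁻ x, ENNReal.ofReal |W₁' x| ^ r < ∞ := by
    have h1 : ∫⁻ x, ENNReal.ofReal |W₁' x| ^ r = ∫⁻ x, (‖W₁ x‖₊ : ℝ≥0∞) ^ r := by
      apply lintegral_congr_ae
      filter_upwards [hW₁eq] with x hx
      rw [← enorm_eq_nnnorm, Real.enorm_eq_ofReal_abs, hx]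
    rw [h1]
    exact aux_lint_lt_top_of_memLp hrpos hW₁
  have hAfin : ∫⁻ x, ENNReal.ofReal |V x| ^ r' < ∞ := by
    refine lt_of_le_of_lt (lintegral_mono fun x => ?_) hW₁r
    simp only [hVdef]
    by_cases hx : 1 < |W₁' x|
    · simp only [if_pos hx]
      exact ENNReal.rpow_le_rpow_of_exponent_le (ENNReal.one_le_ofReal.mpr hx.le) hr'r
    · simp only [if_neg hx, abs_zero, ENNReal.ofReal_zero,
        ENNReal.zero_rpow_of_pos hr'pos]
      exact bot_le
  -- integrability properties of F ∘ h'
  have hφb : ∀ w, ENNReal.ofReal |F (h' w)| ≤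
      ENNReal.ofReal C * (ENNReal.ofReal |h' w| ^ (2:ℝ) + ENNReal.ofReal |h' w| ^ θ) := by
    intro w
    calc ENNReal.ofReal |F (h' w)| ≤ ENNReal.ofReal (C * (|h' w| ^ 2 + |h' w| ^ θ)) :=
        ENNReal.ofReal_le_ofReal (hFbound _)
      _ = ENNReal.ofReal C * (ENNReal.ofReal (|h' w| ^ 2) + ENNReal.ofReal (|h' w| ^ θ)) := by
          rw [ENNReal.ofReal_mul hC.le, ENNReal.ofReal_add (by positivity) (by positivity)]
      _ = _ := by
          congr 2
          · rw [ENNReal.ofReal_pow (abs_nonneg _),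
              ← ENNReal.rpow_natCast (ENNReal.ofReal |h' w|) 2]
            norm_num
          · exact (ENNReal.ofReal_rpow_of_nonneg (abs_nonneg _) (by linarith)).symm
  have hφmeas : Measurable fun w => ENNReal.ofReal |F (h' w)| :=
    ENNReal.measurable_ofReal.comp (hFmeas.comp hh'meas).abs
  have hL1fin : ∫⁻ w, ENNReal.ofReal |F (h' w)| < ∞ := by
    calc ∫⁻ w, ENNReal.ofReal |F (h' w)|
        ≤ ∫⁻ w, ENNReal.ofReal C *
            (ENNReal.ofReal |h' w| ^ (2:ℝ) + ENNReal.ofReal |h' w| ^ θ) :=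
          lintegral_mono hφb
      _ = ENNReal.ofReal C * ((∫⁻ w, ENNReal.ofReal |h' w| ^ (2:ℝ)) +
            ∫⁻ w, ENNReal.ofReal |h' w| ^ θ) := by
          rw [lintegral_const_mul'' (f := fun w => ENNReal.ofReal |h' w| ^ (2:ℝ) + ENNReal.ofReal |h' w| ^ θ) _
            ((humeas.pow_const _).add (humeas.pow_const _)).aemeasurable,
            lintegral_add_left (humeas.pow_const _)]
      _ < ∞ := ENNReal.mul_lt_top ENNReal.ofReal_lt_top
          (ENNReal.add_lt_top.mpr ⟨hmom 2 le_rfl (by linarith), hmom θ hθgt2.le hθq.le⟩)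
  have hBsfin : ∫⁻ w, ENNReal.ofReal |F (h' w)| ^ ss < ∞ := by
    have hstep : ∀ w, ENNReal.ofReal |F (h' w)| ^ ss ≤
        (ENNReal.ofReal C) ^ ss * 2 ^ ss *
          (ENNReal.ofReal |h' w| ^ (2 * ss) + ENNReal.ofReal |h' w| ^ (θ * ss)) := by
      intro w
      calc ENNReal.ofReal |F (h' w)| ^ ss
          ≤ (ENNReal.ofReal C *
              (ENNReal.ofReal |h' w| ^ (2:ℝ) + ENNReal.ofReal |h' w| ^ θ)) ^ ss :=
            ENNReal.rpow_le_rpow (hφb w) hsspos.le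
        _ = (ENNReal.ofReal C) ^ ss *
              (ENNReal.ofReal |h' w| ^ (2:ℝ) + ENNReal.ofReal |h' w| ^ θ) ^ ss :=
            ENNReal.mul_rpow_of_nonneg _ _ hsspos.le
        _ ≤ (ENNReal.ofReal C) ^ ss * (2 ^ ss *
              ((ENNReal.ofReal |h' w| ^ (2:ℝ)) ^ ss + (ENNReal.ofReal |h' w| ^ θ) ^ ss)) := by
            gcongr
            exact aux_add_rpow_le hsspos.le
        _ = _ := by
            rw [← ENNReal.rpow_mul, ← ENNReal.rpow_mul, ← mul_assoc]
    calc ∫⁻ w, ENNReal.ofReal |F (h' w)| ^ ss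
        ≤ ∫⁻ w, (ENNReal.ofReal C) ^ ss * 2 ^ ss *
            (ENNReal.ofReal |h' w| ^ (2 * ss) + ENNReal.ofReal |h' w| ^ (θ * ss)) :=
          lintegral_mono hstep
      _ = (ENNReal.ofReal C) ^ ss * 2 ^ ss * ((∫⁻ w, ENNReal.ofReal |h' w| ^ (2 * ss)) +
            ∫⁻ w, ENNReal.ofReal |h' w| ^ (θ * ss)) := by
          rw [lintegral_const_mul'' (f := fun w => ENNReal.ofReal |h' w| ^ (2 * ss) + ENNReal.ofReal |h' w| ^ (θ * ss)) _
            ((humeas.pow_const _).add (humeas.pow_const _)).aemeasurable,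
            lintegral_add_left (humeas.pow_const _)]
      _ < ∞ := by
          refine ENNReal.mul_lt_top (ENNReal.mul_lt_top ?_ ?_) ?_
          · exact ENNReal.rpow_lt_top_of_nonneg hsspos.le ENNReal.ofReal_ne_top
          · exact ENNReal.rpow_lt_top_of_nonneg hsspos.le (by norm_num)
          · exact ENNReal.add_lt_top.mpr
              ⟨hmom (2 * ss) (by linarith) (by linarith),
               hmom (θ * ss) (le_trans (by linarith : (2:ℝ) ≤ 2 * ss) h2ss) hθss.le⟩
    -- apply Young's inequality
  have hfVmeas : Measurable fun x => ENNReal.ofReal |V x| :=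
    ENNReal.measurable_ofReal.comp hVmeas.abs
  have hTfin : ∫⁻ y, (∫⁻ w, ENNReal.ofReal |V (y - w)| * ENNReal.ofReal |F (h' w)|) ^ p < ∞ :=
    aux_young hfVmeas hφmeas hppos hr'pos hsspos hinvr'.le hsp hsum hAfin hBsfin
  set T : (Fin N → ℝ) → ℝ≥0∞ :=
    fun y => ∫⁻ w, ENNReal.ofReal |V (y - w)| * ENNReal.ofReal |F (h' w)| with hTdef
  have hTmeas : Measurable T := by
    have hunc : Measurable fun z : (Fin N → ℝ) × (Fin N → ℝ) =>
        ENNReal.ofReal |V (z.1 - z.2)| * ENNReal.ofReal |F (h' z.2)| :=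
      (hfVmeas.comp (measurable_fst.sub measurable_snd)).mul (hφmeas.comp measurable_snd)
    exact hunc.lintegral_prod_right'
  set g : (Fin N → ℝ) → ℝ := fun y => (T y).toReal with hgdef
  have hgmeas : Measurable g := hTmeas.ennreal_toReal
  have hgmem : MemLp g (ENNReal.ofReal p) volume := by
    refine ⟨hgmeas.aestronglyMeasurable, ?_⟩
    rw [eLpNorm_eq_lintegral_rpow_enorm_toReal
      (by simp only [ne_eq, ENNReal.ofReal_eq_zero, not_le]; linarith) ENNReal.ofReal_ne_top,
      ENNReal.toReal_ofReal hppos.le]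
    refine ENNReal.rpow_lt_top_of_nonneg (one_div_pos.mpr hppos).le ?_
    refine (lt_of_le_of_lt (lintegral_mono fun y => ?_) hTfin).ne
    refine ENNReal.rpow_le_rpow ?_ hppos.le
    rw [Real.enorm_eq_ofReal_abs, hgdef, abs_of_nonneg ENNReal.toReal_nonneg]
    exact ENNReal.ofReal_toReal_le
  -- the constant and the L¹ mass
  set L : ℝ≥0∞ := ∫⁻ w, ENNReal.ofReal |F (h' w)| with hLdef
  have hC'0 : 0 ≤ (1 + M) * L.toReal :=
    mul_nonneg (by linarith) ENNReal.toReal_nonneg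
  refine ⟨(1 + M) * L.toReal, hC'0, g, fun y => ENNReal.toReal_nonneg, hgmem, ?_⟩
  -- transporting the a.e. identities along w ↦ y - w
  have hmpy : ∀ y : Fin N → ℝ,
      MeasurePreserving (fun w : Fin N → ℝ => y - w) volume volume := by
    intro y
    have := (measurePreserving_add_left (volume : Measure (Fin N → ℝ)) y).comp
      (MeasureTheory.Measure.measurePreserving_neg volume)
    simpa [Function.comp_def, sub_eq_add_neg] using this
  have hWeq : ∀ᵐ x ∂(volume : Measure (Fin N → ℝ)), W x = V x + B x := by
    filter_upwards [hW₁eq, hW₂eq] with x h1 h2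
    rw [hW]
    simp only [Pi.add_apply, hBdef]
    rw [h1, h2]
    ring
  have hWy : ∀ y : Fin N → ℝ, ∀ᵐ w ∂(volume : Measure (Fin N → ℝ)),
      W (y - w) = V (y - w) + B (y - w) :=
    fun y => (hmpy y).quasiMeasurePreserving.ae hWeq
  have hBy : ∀ y : Fin N → ℝ, ∀ᵐ w ∂(volume : Measure (Fin N → ℝ)),
      |B (y - w)| ≤ 1 + M :=
    fun y => (hmpy y).quasiMeasurePreserving.ae hBbd
  have hφeq : ∀ᵐ w ∂(volume : Measure (Fin N → ℝ)), F (h w) = F (h' w) :=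
    hh'eq.mono fun w e => by rw [e]
  have hTae : ∀ᵐ y ∂(volume : Measure (Fin N → ℝ)), T y < ∞ := by
    have h1 : ∀ᵐ y ∂(volume : Measure (Fin N → ℝ)), T y ^ p < ∞ :=
      ae_lt_top (hTmeas.pow_const p) hTfin.ne
    filter_upwards [h1] with y hy
    rcases eq_or_ne (T y) ∞ with he | he
    · rw [he, ENNReal.top_rpow_of_pos hppos] at hy
      exact absurd hy (lt_irrefl _)
    · exact he.lt_top
  filter_upwards [hTae] with y hTy
  have step1 : |∫ w, W (y - w) * F (h w)| ≤
      (∫⁻ w, ENNReal.ofReal ‖W (y - w) * F (h w)‖).toReal := by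
    rw [← Real.norm_eq_abs]
    exact norm_integral_le_lintegral_norm _
  have hcongr : (∫⁻ w, ENNReal.ofReal ‖W (y - w) * F (h w)‖)
      = ∫⁻ w, ENNReal.ofReal ‖(V (y - w) + B (y - w)) * F (h' w)‖ := by
    apply lintegral_congr_ae
    filter_upwards [hWy y, hφeq] with w h1 h2
    rw [h1, h2]
  have hptwise : ∀ᵐ w ∂(volume : Measure (Fin N → ℝ)),
      ENNReal.ofReal ‖(V (y - w) + B (y - w)) * F (h' w)‖
        ≤ ENNReal.ofReal |V (y - w)| * ENNReal.ofReal |F (h' w)|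
          + ENNReal.ofReal (1 + M) * ENNReal.ofReal |F (h' w)| := by
    filter_upwards [hBy y] with w hBw
    rw [Real.norm_eq_abs, abs_mul, ENNReal.ofReal_mul (abs_nonneg _)]
    have hVB : ENNReal.ofReal |V (y - w) + B (y - w)|
        ≤ ENNReal.ofReal |V (y - w)| + ENNReal.ofReal (1 + M) := by
      calc ENNReal.ofReal |V (y - w) + B (y - w)|
          ≤ ENNReal.ofReal (|V (y - w)| + |B (y - w)|) :=
            ENNReal.ofReal_le_ofReal (abs_add_le _ _)
        _ = ENNReal.ofReal |V (y - w)| + ENNReal.ofReal |B (y - w)| :=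
            ENNReal.ofReal_add (abs_nonneg _) (abs_nonneg _)
        _ ≤ ENNReal.ofReal |V (y - w)| + ENNReal.ofReal (1 + M) := by
            gcongr
    calc ENNReal.ofReal |V (y - w) + B (y - w)| * ENNReal.ofReal |F (h' w)|
        ≤ (ENNReal.ofReal |V (y - w)| + ENNReal.ofReal (1 + M))
            * ENNReal.ofReal |F (h' w)| := by gcongr
      _ = ENNReal.ofReal |V (y - w)| * ENNReal.ofReal |F (h' w)|
            + ENNReal.ofReal (1 + M) * ENNReal.ofReal |F (h' w)| := by ring
  have step2 : (∫⁻ w, ENNReal.ofReal ‖(V (y - w) + B (y - w)) * F (h' w)‖)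
      ≤ T y + ENNReal.ofReal (1 + M) * L := by
    calc (∫⁻ w, ENNReal.ofReal ‖(V (y - w) + B (y - w)) * F (h' w)‖)
        ≤ ∫⁻ w, (ENNReal.ofReal |V (y - w)| * ENNReal.ofReal |F (h' w)|
            + ENNReal.ofReal (1 + M) * ENNReal.ofReal |F (h' w)|) :=
          lintegral_mono_ae hptwise
      _ = T y + ENNReal.ofReal (1 + M) * L := by
          have hm1' : Measurable fun w : Fin N → ℝ =>
              ENNReal.ofReal |V (y - w)| * ENNReal.ofReal |F (h' w)| :=
            (hfVmeas.comp (measurable_const.sub measurable_id)).mul hφmeas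
          rw [lintegral_add_left hm1', lintegral_const_mul'' _ hφmeas.aemeasurable]
  have hML : ENNReal.ofReal (1 + M) * L < ∞ :=
    ENNReal.mul_lt_top ENNReal.ofReal_lt_top hL1fin
  have hfin2 : T y + ENNReal.ofReal (1 + M) * L ≠ ∞ :=
    (ENNReal.add_lt_top.mpr ⟨hTy, hML⟩).ne
  calc |∫ w, W (y - w) * F (h w)|
      ≤ (∫⁻ w, ENNReal.ofReal ‖W (y - w) * F (h w)‖).toReal := step1
    _ ≤ (T y + ENNReal.ofReal (1 + M) * L).toReal := by
        rw [hcongr]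
        exact ENNReal.toReal_mono hfin2 step2
    _ = (1 + M) * L.toReal + g y := by
        rw [ENNReal.toReal_add hTy.ne hML.ne, ENNReal.toReal_mul,
          ENNReal.toReal_ofReal (by linarith)]
        rw [hgdef]
        ring
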